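/- Let A be a bicomplete abelian category (having all small limits and colimits), and let (𝒳, 𝒴) be a cotorsion pair of chain complexes over A, meaning 𝒳 = { X : Ext^1(X,Y) = 0 for all Y ∈ 𝒴 } and 𝒴 = { Y : Ext^1(X,Y) = 0 for all X ∈ 𝒳 }, where Ext^1 is computed in the abelian category Ch(A) of chain complexes over A. Let 𝒞 be a class of objects of A. If the sphere complexes S^n(C) lie in 𝒴 for every integer n and every C ∈ 𝒞, then every bounded above chain complex all of whose components lie in 𝒞 is also in 𝒴. -/

import Mathlib

/-!
STATEMENT 6: Let `A` be a bicomplete abelian category and `(𝒳, 𝒴)` a cotorsion pair in the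
category of `ℤ`-indexed chain complexes over `A` (each class is the `Ext¹`-orthogonal of the
other, `Ext¹` computed in `Ch(A)`).  Let `𝒞` be a class of objects of `A`.  If `S^n C ∈ 𝒴`
for all `n : ℤ` and `C ∈ 𝒞`, then every bounded above complex with components in `𝒞` is in `𝒴`.

The vanishing of the (Yoneda) group `Ext¹(A, B)` is expressed by the (equivalent)
statement that every short exact sequence `0 → B → E → A → 0` splits.
-/

universe v u

open CategoryTheory Limits

/-- Vanishing of (Yoneda) `Ext¹(A, B)` in an abelian category: every short exact
sequence `0 → B → E → A → 0` splits. -/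
def Ext1Vanishes {C : Type*} [Category C] [Abelian C] (A B : C) : Prop :=
  ∀ (E : C) (f : B ⟶ E) (g : E ⟶ A) (w : f ≫ g = 0),
    (ShortComplex.mk f g w).ShortExact → ∃ s : A ⟶ E, s ≫ g = 𝟙 A

variable (A : Type u) [Category.{v} A] [Abelian A]

/-- The sphere complex `S^n C`: `C` concentrated in degree `n`. -/
noncomputable def sphere (n : ℤ) (C : A) : ChainComplex A ℤ :=
  (HomologicalComplex.single A (ComplexShape.down ℤ) n).obj C

namespace CotorsionAux

variable {A}

section Build

variable (K E : ChainComplex A ℤ) (N : ℤ) (P : ∀ n : ℤ, (K.X n ⟶ E.X n) → Prop)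
  (base : ∀ n : ℤ, N < n → {s : K.X n ⟶ E.X n // P n s})
  (step : ∀ n : ℤ, ¬ N < n → ∀ s' : {s : K.X (n + 1) ⟶ E.X (n + 1) // P (n + 1) s},
    {s : K.X n ⟶ E.X n // P n s ∧ K.d (n + 1) n ≫ s = s'.1 ≫ E.d (n + 1) n})

noncomputable def buildSec (n : ℤ) : {s : K.X n ⟶ E.X n // P n s} :=
  if h : N < n then base n h
  else
    let prev := buildSec (n + 1)
    ⟨(step n h prev).1, (step n h prev).2.1⟩
termination_by (N + 1 - n).toNat
decreasing_by omega

lemma buildSec_pos (n : ℤ) (h : N < n) :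
    buildSec K E N P base step n = base n h := by
  rw [buildSec]; exact dif_pos h

lemma buildSec_neg (n : ℤ) (h : ¬ N < n) :
    (buildSec K E N P base step n).1
      = (step n h (buildSec K E N P base step (n + 1))).1 := by
  rw [buildSec]; rw [dif_neg h]

lemma buildSec_compat
    (hbase : ∀ (n : ℤ) (h : N < n) (h' : N < n + 1),
      K.d (n + 1) n ≫ (base n h).1 = (base (n + 1) h').1 ≫ E.d (n + 1) n)
    (n : ℤ) :
    K.d (n + 1) n ≫ (buildSec K E N P base step n).1
      = (buildSec K E N P base step (n + 1)).1 ≫ E.d (n + 1) n := by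
  by_cases h : N < n
  · have h' : N < n + 1 := by omega
    rw [buildSec_pos K E N P base step n h, buildSec_pos K E N P base step (n + 1) h']
    exact hbase n h h'
  · rw [buildSec_neg K E N P base step n h]
    exact (step n h (buildSec K E N P base step (n + 1))).2.2

end Build

section Mod

variable (K E : ChainComplex A ℤ) (g : E ⟶ K) (n : ℤ)
  (s' : K.X (n + 1) ⟶ E.X (n + 1))

/-- Objects of the modified complex: `E.X n` in degree `n`, `K.X m` elsewhere. -/
noncomputable abbrev modObj (m : ℤ) : A := if m = n then E.X n else K.X m

/-- Differential of the modified complex. -/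
noncomputable def modD (m m' : ℤ) : modObj K E n m ⟶ modObj K E n m' :=
  if hr : m' + 1 = m then
    if hm : m = n then
      eqToHom (if_pos hm) ≫ E.d n m' ≫ g.f m' ≫
        eqToHom (if_neg (show ¬ m' = n by omega)).symm
    else if hm' : m' = n then
      eqToHom (if_neg hm) ≫ eqToHom (congrArg K.X (show m = n + 1 by omega)) ≫
        s' ≫ E.d (n + 1) n ≫ eqToHom (if_pos hm').symm
    else
      eqToHom (if_neg hm) ≫ K.d m m' ≫ eqToHom (if_neg hm').symm
  else 0

/-- The modified complex. -/
noncomputable abbrev modComplex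
    (hd : ∀ m, K.d m (n + 1) ≫ s' ≫ E.d (n + 1) n = 0) : ChainComplex A ℤ where
  X := modObj K E n
  d := modD K E g n s'
  shape := by
    intro m m' h
    exact dif_neg (by simpa using h)
  d_comp_d' := by
    rintro m m' m'' (hr : m' + 1 = m) (hr' : m'' + 1 = m')
    subst hr hr'
    by_cases h2 : m'' + 1 + 1 = n
    · have h1 : ¬ (m'' + 1 = n) := by omega
      have h0 : ¬ (m'' = n) := by omega
      simp [modD, h2, h1, h0]
    · by_cases h1 : m'' + 1 = n
      · have h0 : ¬ (m'' = n) := by omega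
        simp [modD, h2, h1, h0]
      · by_cases h0 : m'' = n
        · subst h0
          simp [modD, h2, h1, reassoc_of% (hd (m'' + 1 + 1))]
        · simp [modD, h2, h1, h0]

variable (hd : ∀ m, K.d m (n + 1) ≫ s' ≫ E.d (n + 1) n = 0)

/-- The projection from the modified complex to `K`. -/
noncomputable def modPi (h1 : s' ≫ g.f (n + 1) = 𝟙 _) :
    modComplex K E g n s' hd ⟶ K where
  f m :=
    if hm : m = n then
      eqToHom (if_pos hm) ≫ g.f n ≫ eqToHom (congrArg K.X hm.symm)
    else eqToHom (if_neg hm)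
  comm' := by
    rintro m m' (hr : m' + 1 = m)
    subst hr
    show _ ≫ K.d _ _ = modD K E g n s' _ _ ≫ _
    by_cases h0 : m' = n
    · subst h0
      simp [modD, (by omega : ¬ (m' + 1 = m')), ← HomologicalComplex.Hom.comm,
        reassoc_of% h1]
    · by_cases hm : m' + 1 = n
      · subst hm
        simp [modD, h0]
      · simp [modD, hm, h0]

/-- The inclusion of the sphere into the modified complex. -/
noncomputable def modIota (X : ChainComplex A ℤ) (f : X ⟶ E) (w : f ≫ g = 0) :
    (HomologicalComplex.single A (ComplexShape.down ℤ) n).obj (X.X n) ⟶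
      modComplex K E g n s' hd :=
  HomologicalComplex.mkHomFromSingle (f.f n ≫ eqToHom (if_pos rfl).symm)
    (by
      rintro i (hi : i + 1 = n)
      have h0 : ¬ (i = n) := by omega
      show _ ≫ modD K E g n s' n i = 0
      have hw : f.f i ≫ g.f i = 0 := by
        rw [← HomologicalComplex.comp_f, w, HomologicalComplex.zero_f]
      simp [modD, hi, h0, reassoc_of% hw])

variable (X : ChainComplex A ℤ) (f : X ⟶ E) (w : f ≫ g = 0)

lemma modIota_comp_modPi (h1 : s' ≫ g.f (n + 1) = 𝟙 _) :
    modIota K E g n s' hd X f w ≫ modPi K E g n s' hd h1 = 0 := by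
  refine HomologicalComplex.hom_ext _ _ fun m => ?_
  by_cases hm : m = n
  · have hm' := hm.symm
    subst hm'
    have hw : f.f n ≫ g.f n = 0 := by
      rw [← HomologicalComplex.comp_f, w, HomologicalComplex.zero_f]
    simp [modIota, modPi, HomologicalComplex.mkHomFromSingle_f, reassoc_of% hw, hw]
  · apply (HomologicalComplex.isZero_single_obj_X (ComplexShape.down ℤ) n (X.X n)
      m hm).eq_of_src

lemma modShortExact (h1 : s' ≫ g.f (n + 1) = 𝟙 _)
    (hse : ∀ m : ℤ, (ShortComplex.mk (f.f m) (g.f m)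
      (by rw [← HomologicalComplex.comp_f, w, HomologicalComplex.zero_f])).ShortExact) :
    (ShortComplex.mk (modIota K E g n s' hd X f w) (modPi K E g n s' hd h1)
      (modIota_comp_modPi K E g n s' hd X f w h1)).ShortExact := by
  rw [HomologicalComplex.shortExact_iff_degreewise_shortExact]
  intro m
  by_cases hm : m = n
  · have hm' := hm.symm
    subst hm'
    refine ShortComplex.shortExact_of_iso ?_ (hse n)
    refine ShortComplex.isoMk
      (HomologicalComplex.singleObjXSelf (ComplexShape.down ℤ) n (X.X n)).symm
      (eqToIso (if_pos rfl : modObj K E n n = E.X n)).symm (Iso.refl _) ?_ ?_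
    · simp [modIota, HomologicalComplex.mkHomFromSingle_f]
      exact Iso.inv_hom_id_assoc _ _
    · simp [modPi]
      exact (eqToHom_trans_assoc _ _ _).trans
        (by simp; exact (Category.id_comp _).trans (Category.comp_id _).symm)
  · have hz : IsZero (((HomologicalComplex.single A (ComplexShape.down ℤ) n).obj
      (X.X n)).X m) := HomologicalComplex.isZero_single_obj_X _ n (X.X n) m hm
    have hpi : (modPi K E g n s' hd h1).f m = eqToHom (if_neg hm) := dif_neg hm
    have : IsIso ((modPi K E g n s' hd h1).f m) := by rw [hpi]; infer_instance
    have hmono : Mono ((modIota K E g n s' hd X f w).f m) :=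
      ⟨fun _ _ _ => hz.eq_of_tgt _ _⟩
    have hepi : Epi ((modPi K E g n s' hd h1).f m) := inferInstance
    have hf0 : (modIota K E g n s' hd X f w).f m = 0 := hz.eq_of_src _ _
    have hgm : Mono ((ShortComplex.mk (modIota K E g n s' hd X f w)
        (modPi K E g n s' hd h1) (modIota_comp_modPi K E g n s' hd X f w h1)).map
        (HomologicalComplex.eval A (ComplexShape.down ℤ) m)).g := by
      show Mono ((modPi K E g n s' hd h1).f m)
      rw [hpi]; infer_instance
    exact { exact := (ShortComplex.exact_iff_mono _ hf0).2 hgm,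
            mono_f := hmono, epi_g := hepi }

/-- The key step: extend a partial section one degree lower. -/
lemma keyStep
    (hse : ∀ m : ℤ, (ShortComplex.mk (f.f m) (g.f m)
      (by rw [← HomologicalComplex.comp_f, w, HomologicalComplex.zero_f])).ShortExact)
    (hExt : Ext1Vanishes K ((HomologicalComplex.single A (ComplexShape.down ℤ) n).obj
      (X.X n)))
    (h1 : s' ≫ g.f (n + 1) = 𝟙 _)
    (h2 : ∀ m j, K.d m (n + 1) ≫ s' ≫ E.d (n + 1) j = 0) :
    ∃ s : K.X n ⟶ E.X n,
      (s ≫ g.f n = 𝟙 _ ∧ ∀ m j, K.d m n ≫ s ≫ E.d n j = 0) ∧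
        K.d (n + 1) n ≫ s = s' ≫ E.d (n + 1) n := by
  have hd : ∀ m, K.d m (n + 1) ≫ s' ≫ E.d (n + 1) n = 0 := fun m => h2 m n
  obtain ⟨σ, hσ⟩ := hExt (modComplex K E g n s' hd) (modIota K E g n s' hd X f w)
    (modPi K E g n s' hd h1) (modIota_comp_modPi K E g n s' hd X f w h1)
    (modShortExact K E g n s' hd X f w h1 hse)
  have hσn : σ.f n ≫ (modPi K E g n s' hd h1).f n = 𝟙 (K.X n) := by
    rw [← HomologicalComplex.comp_f, hσ]; rfl
  have hσn1 : σ.f (n + 1) = eqToHom (if_neg (show ¬ (n + 1 = n) by omega)).symm := by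
    have hth : σ.f (n + 1) ≫ (modPi K E g n s' hd h1).f (n + 1) = 𝟙 (K.X (n + 1)) := by
      rw [← HomologicalComplex.comp_f, hσ]; rfl
    rw [show (modPi K E g n s' hd h1).f (n + 1) =
      eqToHom (if_neg (show ¬ (n + 1 = n) by omega)) from dif_neg (by omega)] at hth
    calc σ.f (n + 1)
        = (σ.f (n + 1) ≫ eqToHom (if_neg (show ¬ (n + 1 = n) by omega))) ≫
            eqToHom (if_neg (show ¬ (n + 1 = n) by omega)).symm := by simp
      _ = eqToHom (if_neg (show ¬ (n + 1 = n) by omega)).symm := by rw [hth]; simp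
  have hc := σ.comm (n + 1) n
  have hdd : (modComplex K E g n s' hd).d (n + 1) n ≫ eqToHom (if_pos rfl) =
      eqToHom (if_neg (show ¬ (n + 1 = n) by omega)) ≫ s' ≫ E.d (n + 1) n := by
    show modD K E g n s' (n + 1) n ≫ _ = _
    simp [modD, (show ¬ (n + 1 = n) by omega)]
  have hkey : K.d (n + 1) n ≫ σ.f n ≫ eqToHom (if_pos rfl : modObj K E n n = E.X n)
      = s' ≫ E.d (n + 1) n := by
    rw [← Category.assoc, ← hc, Category.assoc, hdd, hσn1]
    simp
  refine ⟨σ.f n ≫ eqToHom (if_pos rfl : modObj K E n n = E.X n), ⟨?_, ?_⟩, hkey⟩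
  · rw [show (𝟙 (K.X n)) = σ.f n ≫ (modPi K E g n s' hd h1).f n from hσn.symm]
    rw [show (modPi K E g n s' hd h1).f n =
      eqToHom (if_pos rfl) ≫ g.f n ≫ eqToHom (congrArg K.X rfl) from dif_pos rfl]
    simp
  · intro m j
    by_cases hr : n + 1 = m
    · subst hr
      have : K.d (n + 1) n ≫ (σ.f n ≫ eqToHom (if_pos rfl)) ≫ E.d n j
          = (K.d (n + 1) n ≫ σ.f n ≫ eqToHom (if_pos rfl)) ≫ E.d n j := by simp
      rw [this, hkey]
      simp
    · rw [K.shape m n (by simpa using hr)]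
      simp

end Mod

section Assemble

variable (K E : ChainComplex A ℤ) (g : E ⟶ K)

/-- The property required of a partial section in degree `n`. -/
def secProp (n : ℤ) (s : K.X n ⟶ E.X n) : Prop :=
  s ≫ g.f n = 𝟙 (K.X n) ∧ ∀ m j, K.d m n ≫ s ≫ E.d n j = 0

lemma exists_section (N : ℤ)
    (hiso : ∀ m : ℤ, N < m → IsIso (g.f m))
    (step : ∀ n : ℤ, ¬ N < n → ∀ s' : K.X (n + 1) ⟶ E.X (n + 1),
      s' ≫ g.f (n + 1) = 𝟙 _ → (∀ m j, K.d m (n + 1) ≫ s' ≫ E.d (n + 1) j = 0) →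
      ∃ s : K.X n ⟶ E.X n,
        (s ≫ g.f n = 𝟙 _ ∧ ∀ m j, K.d m n ≫ s ≫ E.d n j = 0) ∧
          K.d (n + 1) n ≫ s = s' ≫ E.d (n + 1) n) :
    ∃ s : K ⟶ E, s ≫ g = 𝟙 K := by
  have huniq : ∀ (m : ℤ) (hm : N < m) (u : K.X m ⟶ E.X m), u ≫ g.f m = 𝟙 _ →
      u = @CategoryTheory.inv A _ _ _ (g.f m) (hiso m hm) := by
    intro m hm u hu
    haveI := hiso m hm
    rw [← cancel_mono (g.f m), hu]
    simp
  have hinvd : ∀ (n : ℤ) (h : N < n) (h' : N < n + 1),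
      K.d (n + 1) n ≫ @CategoryTheory.inv A _ _ _ (g.f n) (hiso n h)
        = @CategoryTheory.inv A _ _ _ (g.f (n + 1)) (hiso (n + 1) h') ≫ E.d (n + 1) n := by
    intro n h h'
    haveI := hiso n h
    haveI := hiso (n + 1) h'
    rw [← cancel_epi (g.f (n + 1))]
    simp
  have base : ∀ n : ℤ, N < n → {s : K.X n ⟶ E.X n // secProp K E g n s} := by
    intro n hn
    refine ⟨@CategoryTheory.inv A _ _ _ (g.f n) (hiso n hn), ?_, ?_⟩
    · haveI := hiso n hn
      simp
    · intro m j
      by_cases hr : n + 1 = m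
      · subst hr
        rw [reassoc_of% (hinvd n hn (by omega))]
        simp
      · rw [K.shape m n (by simpa using hr), zero_comp]
  have stepF : ∀ n : ℤ, ¬ N < n →
      ∀ s' : {s : K.X (n + 1) ⟶ E.X (n + 1) // secProp K E g (n + 1) s},
      {s : K.X n ⟶ E.X n // secProp K E g n s ∧
        K.d (n + 1) n ≫ s = s'.1 ≫ E.d (n + 1) n} := by
    intro n hn s'
    exact ⟨(step n hn s'.1 s'.2.1 s'.2.2).choose,
      ⟨(step n hn s'.1 s'.2.1 s'.2.2).choose_spec.1.1,
       (step n hn s'.1 s'.2.1 s'.2.2).choose_spec.1.2⟩,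
      (step n hn s'.1 s'.2.1 s'.2.2).choose_spec.2⟩
  have hbase : ∀ (n : ℤ) (h : N < n) (h' : N < n + 1),
      K.d (n + 1) n ≫ (base n h).1 = (base (n + 1) h').1 ≫ E.d (n + 1) n := by
    intro n h h'
    rw [huniq n h _ (base n h).2.1, huniq (n + 1) h' _ (base (n + 1) h').2.1]
    exact hinvd n h h'
  refine ⟨{ f := fun n => (buildSec K E N (secProp K E g) base stepF n).1,
            comm' := ?_ }, ?_⟩
  · rintro i j (hr : j + 1 = i)
    subst hr
    exact (buildSec_compat K E N (secProp K E g) base stepF hbase j).symm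
  · refine HomologicalComplex.hom_ext _ _ fun n => ?_
    simpa using (buildSec K E N (secProp K E g) base stepF n).2.1

end Assemble

end CotorsionAux

theorem cotorsionPair_bddAbove_of_spheres
    [HasLimits A] [HasColimits A]
    (𝒳 𝒴 : Set (ChainComplex A ℤ))
    (h𝒳 : ∀ K, K ∈ 𝒳 ↔ ∀ L ∈ 𝒴, Ext1Vanishes K L)
    (h𝒴 : ∀ L, L ∈ 𝒴 ↔ ∀ K ∈ 𝒳, Ext1Vanishes K L)
    (𝒞 : Set A)
    (hS : ∀ (n : ℤ) (C : A), C ∈ 𝒞 → sphere A n C ∈ 𝒴)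
    (X : ChainComplex A ℤ) (hbdd : ∃ N : ℤ, ∀ n > N, IsZero (X.X n))
    (hcomp : ∀ n, X.X n ∈ 𝒞) :
    X ∈ 𝒴 := by
  obtain ⟨N, hN⟩ := hbdd
  rw [h𝒴]
  intro K hK
  intro E f g w hse
  have hdeg : ∀ m : ℤ, (ShortComplex.mk (f.f m) (g.f m)
      (by rw [← HomologicalComplex.comp_f, w, HomologicalComplex.zero_f])).ShortExact :=
    fun m => (HomologicalComplex.shortExact_iff_degreewise_shortExact _).1 hse m
  have hiso : ∀ m : ℤ, N < m → IsIso (g.f m) := by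
    intro m hm
    have h0 : f.f m = 0 := (hN m hm).eq_of_src _ _
    have hm1 : Mono (g.f m) := (hdeg m).exact.mono_g h0
    have hm2 : Epi (g.f m) := (hdeg m).epi_g
    exact isIso_of_mono_of_epi _
  have hExt : ∀ n : ℤ, Ext1Vanishes K
      ((HomologicalComplex.single A (ComplexShape.down ℤ) n).obj (X.X n)) :=
    fun n => (h𝒳 K).1 hK _ (hS n _ (hcomp n))
  exact CotorsionAux.exists_section K E g N hiso
    (fun n hn s' h1 h2 =>
      CotorsionAux.keyStep K E g n s' X f w hdeg (hExt n) h1 h2)
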